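/- For every ν ∈ (0,1] and every τ ∈ ℝ one has |1 − V_0(τ + i/2)/V_0(iΥ_ν)|² = K^ν(τ), i.e. the squared modulus of 1 − V_0(τ+i/2)/V_0(iΥ_ν) equals (1 + 4τ² + 4w_ν² − 4w_ν·(sech(πτ) + 2τ·tanh(πτ)))/(1 + 4τ²). -/

import Mathlib

/-- Υ_ν := √(1 − ν²). -/
noncomputable def Ups (ν : ℝ) : ℝ := Real.sqrt (1 - ν ^ 2)

/-- w_ν := Υ_ν · cot(π Υ_ν / 2) for ν ∈ [0,1), with w_1 := 2/π (continuous extension). -/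
noncomputable def w (ν : ℝ) : ℝ :=
  if ν = 1 then 2 / Real.pi else Ups ν * Real.cot (Real.pi * Ups ν / 2)

/-- V_l(z) := Γ((l+1+iz)/2)Γ((l+1−iz)/2) / (2 Γ((l+2+iz)/2)Γ((l+2−iz)/2)). -/
noncomputable def Vl (l : ℕ) (z : ℂ) : ℂ :=
  Complex.Gamma ((l + 1 + Complex.I * z) / 2) * Complex.Gamma ((l + 1 - Complex.I * z) / 2) /
    (2 * Complex.Gamma ((l + 2 + Complex.I * z) / 2) * Complex.Gamma ((l + 2 - Complex.I * z) / 2))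

/-- K^ν(τ) := (1 + 4τ² + 4w_ν² − 4w_ν(sech(πτ) + 2τ tanh(πτ)))/(1 + 4τ²). -/
noncomputable def Kf (ν τ : ℝ) : ℝ :=
  (1 + 4 * τ ^ 2 + 4 * (w ν) ^ 2
      - 4 * w ν * (1 / Real.cosh (Real.pi * τ) + 2 * τ * Real.tanh (Real.pi * τ)))
    / (1 + 4 * τ ^ 2)

open Complex in
lemma Vl0_eq (z : ℂ) (h1 : I * z / 2 ≠ 0)
    (h2 : Complex.cos ((Real.pi : ℂ) * (I * z / 2)) ≠ 0)
    (h3 : Complex.sin ((Real.pi : ℂ) * (I * z / 2)) ≠ 0) :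
    Vl 0 z = Complex.tan ((Real.pi : ℂ) * (I * z / 2)) / (I * z) := by
  set a := I * z / 2 with ha
  have e1 : ((0:ℕ) + 1 + I * z) / 2 = 1/2 + a := by rw [ha]; push_cast; ring
  have e2 : ((0:ℕ) + 1 - I * z) / 2 = 1/2 - a := by rw [ha]; push_cast; ring
  have e3 : ((0:ℕ) + 2 + I * z) / 2 = a + 1 := by rw [ha]; push_cast; ring
  have e4 : ((0:ℕ) + 2 - I * z) / 2 = 1 - a := by rw [ha]; push_cast; ring
  have hpi : (Real.pi : ℂ) ≠ 0 := by
    exact_mod_cast Real.pi_ne_zero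
  have hrefl1 : Complex.Gamma (1/2 + a) * Complex.Gamma (1/2 - a)
      = (Real.pi : ℂ) / Complex.cos ((Real.pi : ℂ) * a) := by
    have h := Complex.Gamma_mul_Gamma_one_sub (1/2 + a)
    rw [show (1:ℂ) - (1/2 + a) = 1/2 - a by ring] at h
    rw [h]
    congr 1
    rw [show (Real.pi : ℂ) * (1/2 + a) = Real.pi/2 + Real.pi * a by ring, Complex.sin_add,
      Complex.sin_pi_div_two, Complex.cos_pi_div_two]
    ring
  have hrefl2 : Complex.Gamma a * Complex.Gamma (1 - a)
      = (Real.pi : ℂ) / Complex.sin ((Real.pi : ℂ) * a) := Complex.Gamma_mul_Gamma_one_sub a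
  have hadd : Complex.Gamma (a + 1) = a * Complex.Gamma a := Complex.Gamma_add_one a h1
  have hIz : I * z = 2 * a := by rw [ha]; ring
  unfold Vl
  rw [e1, e2, e3, e4, hadd, hIz, Complex.tan_eq_sin_div_cos, hrefl1,
    show 2 * (a * Complex.Gamma a) * Complex.Gamma (1 - a)
      = 2 * a * (Complex.Gamma a * Complex.Gamma (1 - a)) by ring, hrefl2]
  field_simp

open Complex in
lemma w_pos {ν : ℝ} (hν : ν ∈ Set.Ioc (0:ℝ) 1) : 0 < w ν := by
  rcases eq_or_lt_of_le hν.2 with h1 | h1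
  · subst h1
    rw [w, if_pos rfl]
    positivity
  · have hU0 : 0 < Ups ν := by
      rw [Ups]; apply Real.sqrt_pos.2; nlinarith [hν.1]
    have hU1 : Ups ν < 1 := by
      rw [Ups]
      nlinarith [Real.sq_sqrt (by nlinarith [hν.1] : (0:ℝ) ≤ 1 - ν^2),
        Real.sqrt_nonneg (1 - ν^2), hν.1]
    have hne : ν ≠ 1 := ne_of_lt h1
    rw [w, if_neg hne, Real.cot_eq_cos_div_sin]
    have hc : 0 < Real.cos (Real.pi * Ups ν / 2) := by
      apply Real.cos_pos_of_mem_Ioo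
      constructor <;> nlinarith [Real.pi_pos]
    have hs : 0 < Real.sin (Real.pi * Ups ν / 2) := by
      apply Real.sin_pos_of_pos_of_lt_pi <;> nlinarith [Real.pi_pos]
    positivity

open Complex in
lemma Vl0_at_Ups {ν : ℝ} (hν : ν ∈ Set.Ioc (0:ℝ) 1) :
    Vl 0 (I * (Ups ν : ℂ)) = 1 / ((w ν : ℝ) : ℂ) := by
  rcases eq_or_lt_of_le hν.2 with h1 | h1
  · -- ν = 1 : Ups = 0
    subst h1
    have hU : Ups 1 = 0 := by rw [Ups]; norm_num
    rw [hU, w, if_pos rfl]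
    unfold Vl
    have e1 : ((0:ℕ) + 1 + I * (I * ((0:ℝ):ℂ))) / 2 = 1/2 := by push_cast; ring
    have e2 : ((0:ℕ) + 1 - I * (I * ((0:ℝ):ℂ))) / 2 = 1/2 := by push_cast; ring
    have e3 : ((0:ℕ) + 2 + I * (I * ((0:ℝ):ℂ))) / 2 = 1 := by push_cast; ring
    have e4 : ((0:ℕ) + 2 - I * (I * ((0:ℝ):ℂ))) / 2 = 1 := by push_cast; ring
    rw [e1, e2, e3, e4, Complex.Gamma_one]
    have h := Complex.Gamma_mul_Gamma_one_sub (1/2)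
    rw [show (1:ℂ) - 1/2 = 1/2 by ring] at h
    rw [h, show (Real.pi:ℂ) * (1/2) = Real.pi/2 by ring, Complex.sin_pi_div_two]
    have hpi : (Real.pi : ℂ) ≠ 0 := by exact_mod_cast Real.pi_ne_zero
    push_cast
    field_simp
  · -- ν < 1
    have hU0 : 0 < Ups ν := by
      rw [Ups]; apply Real.sqrt_pos.2; nlinarith [hν.1]
    have hU1 : Ups ν < 1 := by
      rw [Ups]
      nlinarith [Real.sq_sqrt (by nlinarith [hν.1] : (0:ℝ) ≤ 1 - ν^2),
        Real.sqrt_nonneg (1 - ν^2), hν.1]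
    have hne : ν ≠ 1 := ne_of_lt h1
    have hc : 0 < Real.cos (Real.pi * Ups ν / 2) := by
      apply Real.cos_pos_of_mem_Ioo
      constructor <;> nlinarith [Real.pi_pos]
    have hs : 0 < Real.sin (Real.pi * Ups ν / 2) := by
      apply Real.sin_pos_of_pos_of_lt_pi <;> nlinarith [Real.pi_pos]
    have hIz : I * (I * ((Ups ν : ℝ):ℂ)) = ((-(Ups ν) : ℝ) : ℂ) := by
      push_cast; rw [← mul_assoc, Complex.I_mul_I]; ring
    have harg : (Real.pi : ℂ) * (I * (I * ((Ups ν:ℝ):ℂ)) / 2)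
        = ((-(Real.pi * Ups ν / 2) : ℝ) : ℂ) := by
      rw [hIz]; push_cast; ring
    rw [Vl0_eq]
    · have hw : w ν = Ups ν * (Real.cos (Real.pi * Ups ν / 2) / Real.sin (Real.pi * Ups ν / 2)) := by
        rw [w, if_neg hne, Real.cot_eq_cos_div_sin]
      rw [harg, hIz, ← Complex.ofReal_tan, hw]
      norm_cast
      rw [Real.tan_neg, Real.tan_eq_sin_div_cos]
      set C := Real.cos (Real.pi * Ups ν / 2) with hC
      set S := Real.sin (Real.pi * Ups ν / 2) with hS
      have hne2 : S ≠ 0 := ne_of_gt hs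
      have hne3 : C ≠ 0 := ne_of_gt hc
      have hne4 : Ups ν ≠ 0 := ne_of_gt hU0
      field_simp
    · rw [show I * (I * ((Ups ν:ℝ):ℂ)) / 2 = ((-(Ups ν)/2 : ℝ):ℂ) by
        rw [hIz]; push_cast; ring]
      have : -(Ups ν)/2 ≠ 0 := by intro h; nlinarith
      exact_mod_cast this
    · rw [harg, ← Complex.ofReal_cos]
      have : Real.cos (-(Real.pi * Ups ν / 2)) ≠ 0 := by
        rw [Real.cos_neg]; exact ne_of_gt hc
      exact_mod_cast this
    · rw [harg, ← Complex.ofReal_sin]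
      have : Real.sin (-(Real.pi * Ups ν / 2)) ≠ 0 := by
        rw [Real.sin_neg]; simpa using ne_of_gt hs
      exact_mod_cast this


open Complex in
lemma aux_complex_eq (C S u v : ℝ) (hC2 : C^2 = S^2 + 1)
    (hu' : u * (C^2+S^2) = 1) (hv' : v * (C^2+S^2) = 2*S*C) :
    ((-C:ℝ):ℂ) + ((S:ℝ):ℂ)*I = (((-u:ℝ):ℂ) + ((v:ℝ):ℂ)*I) * (((C:ℝ):ℂ) + ((S:ℝ):ℂ)*I) := by
  have h2 : C^2 + S^2 = 2*S^2+1 := by rw [hC2]; ring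
  have hpos : (2*S^2+1) ≠ 0 := by positivity
  rw [h2] at hu' hv'
  have hre : -u*C - v*S = -C := by
    have hu2 : u = 1/(2*S^2+1) := by field_simp; linarith
    have hv2 : v = 2*S*C/(2*S^2+1) := by field_simp; linear_combination hv'
    rw [hu2, hv2]; field_simp; ring
  have him : v*C - u*S = S := by
    have hu2 : u = 1/(2*S^2+1) := by field_simp; linarith
    have hv2 : v = 2*S*C/(2*S^2+1) := by field_simp; linear_combination hv'
    rw [hu2, hv2]; field_simp
    first
    | linear_combination 2*S*hC2
    | linear_combination (-2)*S*hC2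
  simp [Complex.ext_iff]
  constructor <;> nlinarith [hre, him]

open Complex in
lemma Vl0_at_half (τ : ℝ) :
    Vl 0 ((τ:ℂ) + I/2)
      = (((-(1/Real.cosh (Real.pi*τ)) : ℝ):ℂ) + ((Real.tanh (Real.pi*τ) : ℝ):ℂ)*I)
        / (((-(1/2):ℝ):ℂ) + ((τ:ℝ):ℂ)*I) := by
  obtain ⟨C, hCdef⟩ : ∃ C, Real.cosh (Real.pi*τ/2) = C := ⟨_, rfl⟩
  obtain ⟨S, hSdef⟩ : ∃ S, Real.sinh (Real.pi*τ/2) = S := ⟨_, rfl⟩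
  have hCpos : 0 < C := hCdef ▸ Real.cosh_pos _
  have hC2 : C^2 = S^2 + 1 := by rw [← hCdef, ← hSdef]; exact Real.cosh_sq _
  have hcoshd : Real.cosh (Real.pi*τ) = C^2 + S^2 := by
    rw [show Real.pi*τ = Real.pi*τ/2 + Real.pi*τ/2 by ring, Real.cosh_add, hCdef, hSdef]; ring
  have hsinhd : Real.sinh (Real.pi*τ) = 2*S*C := by
    rw [show Real.pi*τ = Real.pi*τ/2 + Real.pi*τ/2 by ring, Real.sinh_add, hCdef, hSdef]; ring
  have hch : Real.cosh (Real.pi*τ) ≠ 0 := (Real.cosh_pos _).ne'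
  have hu' : (1/Real.cosh (Real.pi*τ)) * (C^2+S^2) = 1 := by
    rw [← hcoshd]; field_simp
  have hv' : Real.tanh (Real.pi*τ) * (C^2+S^2) = 2*S*C := by
    rw [← hcoshd, Real.tanh_eq_sinh_div_cosh, div_mul_cancel₀ _ hch]
    exact hsinhd
  have hIz : I * ((τ:ℂ) + I/2) = ((-(1/2):ℝ):ℂ) + ((τ:ℝ):ℂ)*I := by
    push_cast
    linear_combination (1/2 : ℂ) * Complex.I_mul_I
  have harg : (Real.pi:ℂ) * (I * ((τ:ℂ) + I/2) / 2)
      = ((-(Real.pi/4):ℝ):ℂ) + ((Real.pi*τ/2 : ℝ):ℂ)*I := by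
    rw [hIz]; push_cast; ring
  have hq : ((Real.sqrt 2/2 : ℝ):ℂ) ≠ 0 := by
    have : Real.sqrt 2 / 2 ≠ 0 := by positivity
    exact_mod_cast this
  have hcos : Complex.cos (((-(Real.pi/4):ℝ):ℂ) + ((Real.pi*τ/2:ℝ):ℂ)*I)
      = ((Real.sqrt 2/2 : ℝ):ℂ) * (((C:ℝ):ℂ) + ((S:ℝ):ℂ)*I) := by
    rw [Complex.cos_add, Complex.cos_mul_I, Complex.sin_mul_I,
      ← Complex.ofReal_cos, ← Complex.ofReal_sin, ← Complex.ofReal_cosh, ← Complex.ofReal_sinh,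
      Real.cos_neg, Real.sin_neg, Real.cos_pi_div_four, Real.sin_pi_div_four, hCdef, hSdef]
    push_cast; ring
  have hsin : Complex.sin (((-(Real.pi/4):ℝ):ℂ) + ((Real.pi*τ/2:ℝ):ℂ)*I)
      = ((Real.sqrt 2/2 : ℝ):ℂ) * (((-C:ℝ):ℂ) + ((S:ℝ):ℂ)*I) := by
    rw [Complex.sin_add, Complex.cos_mul_I, Complex.sin_mul_I,
      ← Complex.ofReal_cos, ← Complex.ofReal_sin, ← Complex.ofReal_cosh, ← Complex.ofReal_sinh,
      Real.cos_neg, Real.sin_neg, Real.cos_pi_div_four, Real.sin_pi_div_four, hCdef, hSdef]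
    push_cast; ring
  have hden : (((C:ℝ):ℂ) + ((S:ℝ):ℂ)*I) ≠ 0 := by
    intro h
    have := congrArg Complex.re h
    simp at this
    linarith
  rw [Vl0_eq]
  · rw [Complex.tan_eq_sin_div_cos, harg, hcos, hsin, hIz,
      mul_div_mul_left _ _ hq]
    congr 1
    rw [div_eq_iff hden]
    have := aux_complex_eq C S (1/Real.cosh (Real.pi*τ)) (Real.tanh (Real.pi*τ)) hC2 hu' hv'
    exact_mod_cast this
  · rw [show I * ((τ:ℂ) + I/2) / 2 = ((-(1/4):ℝ):ℂ) + ((τ/2:ℝ):ℂ)*I by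
      rw [hIz]; push_cast; ring]
    intro h
    have := congrArg Complex.re h
    simp at this
  · rw [harg, hcos]
    exact mul_ne_zero hq hden
  · rw [harg, hsin]
    refine mul_ne_zero hq ?_
    intro h
    have := congrArg Complex.re h
    simp at this
    linarith

/-- For every ν ∈ (0,1] and τ ∈ ℝ: |1 − V_0(τ+i/2)/V_0(iΥ_ν)|² = K^ν(τ). -/
theorem abs_sq_one_sub_V0_ratio (ν : ℝ) (hν : ν ∈ Set.Ioc (0 : ℝ) 1) (τ : ℝ) :
    ‖(1 - Vl 0 ((τ : ℂ) + Complex.I / 2) / Vl 0 (Complex.I * (Ups ν : ℂ)))‖ ^ 2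
      = Kf ν τ := by
  have hw : 0 < w ν := w_pos hν
  have hch : Real.cosh (Real.pi*τ) ≠ 0 := (Real.cosh_pos _).ne'
  rw [Vl0_at_half τ, Vl0_at_Ups hν]
  unfold Kf
  obtain ⟨u, hu⟩ : ∃ u, 1/Real.cosh (Real.pi*τ) = u := ⟨_, rfl⟩
  obtain ⟨v, hv⟩ : ∃ v, Real.tanh (Real.pi*τ) = v := ⟨_, rfl⟩
  obtain ⟨W, hW⟩ : ∃ W, w ν = W := ⟨_, rfl⟩
  have hST : u^2 + v^2 = 1 := by
    rw [← hu, ← hv, Real.tanh_eq_sinh_div_cosh]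
    field_simp
    first
    | linear_combination Real.cosh_sq (Real.pi*τ)
    | linear_combination - Real.cosh_sq (Real.pi*τ)
  have hW' : ((W:ℝ):ℂ) ≠ 0 := by
    rw [← hW]; exact_mod_cast hw.ne'
  have hden : (((-(1/2):ℝ)):ℂ) + ((τ:ℝ):ℂ)*Complex.I ≠ 0 := by
    intro h
    have := congrArg Complex.re h
    simp at this
  rw [hu, hv, hW]
  have key : (1:ℂ) - (((-u : ℝ):ℂ) + ((v:ℝ):ℂ)*Complex.I)
          / (((-(1/2):ℝ):ℂ) + ((τ:ℝ):ℂ)*Complex.I) / (1/((W:ℝ):ℂ))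
      = (((-(1/2) + W * u : ℝ):ℂ) + ((τ - W * v : ℝ):ℂ)*Complex.I)
          / (((-(1/2):ℝ):ℂ) + ((τ:ℝ):ℂ)*Complex.I) := by
    rw [show (1 / ((W:ℝ):ℂ)) = ((W:ℝ):ℂ)⁻¹ from one_div _, div_inv_eq_mul, div_mul_eq_mul_div, eq_div_iff hden, sub_mul,
      div_mul_cancel₀ _ hden, one_mul]
    push_cast
    ring
  rw [key, norm_div, div_pow, Complex.sq_norm, Complex.sq_norm,
    Complex.normSq_add_mul_I, Complex.normSq_add_mul_I]
  have h1 : (-(1/2):ℝ)^2 + τ^2 ≠ 0 := by positivity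
  have h2 : (1:ℝ) + 4*τ^2 ≠ 0 := by positivity
  rw [div_eq_div_iff h1 h2]
  linear_combination (W^2*(4*τ^2+1))*hST
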